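/- In any multipartite tournament, either there exists a 2-Duke, or there exist at least four distinct 3-Dukes. -/
import Mathlib


/-- An orientation of a complete multipartite graph: vertices `V`, partite sets
given as fibers of `part : V → ι`, and `peck` the arc relation. Between any two
vertices in different partite sets there is exactly one arc, and there are no
arcs within a partite set. -/
structure MTour (V : Type*) (ι : Type*) where
  part : V → ι
  peck : V → V → Prop
  complete : ∀ u v, part u ≠ part v → peck u v ∨ peck v u
  inter : ∀ u v, peck u v → part u ≠ part v
  asymm : ∀ u v, peck u v → ¬ peck v u

namespace MTour

variable {V ι : Type*}

/-- There is a directed path of length at most `m` from `d` to `c`. -/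
def hasPath (T : MTour V ι) (m : ℕ) (d c : V) : Prop :=
  ∃ k ≤ m, ∃ f : ℕ → V, f 0 = d ∧ f k = c ∧ ∀ i < k, T.peck (f i) (f (i + 1))

/-- `d` is an `m`-Duke: every vertex in a different partite set is reachable
from `d` by a directed path of length at most `m`. -/
def isDuke (T : MTour V ι) (m : ℕ) (d : V) : Prop :=
  ∀ c, T.part c ≠ T.part d → T.hasPath m d c

/-- `d` is an `m`-King: every other vertex is reachable from `d` by a directed
path of length at most `m`. -/
def isKing (T : MTour V ι) (m : ℕ) (d : V) : Prop :=
  ∀ c, c ≠ d → T.hasPath m d c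

/-- The out-degree of a vertex. -/
noncomputable def outDeg (T : MTour V ι) (v : V) : ℕ :=
  Nat.card {w // T.peck v w}

/-- `e` eclipses `d`: same partite set, `e` pecks everything `d` pecks, and
at least one vertex `d` does not peck. -/
def eclipses (T : MTour V ι) (e d : V) : Prop :=
  T.part e = T.part d ∧ (∀ c, T.peck d c → T.peck e c) ∧ ∃ c, T.peck e c ∧ ¬ T.peck d c

/-- `d` is non-eclipsed: no vertex of its partite set eclipses it. -/
def nonEclipsed (T : MTour V ι) (d : V) : Prop :=
  ∀ e, ¬ T.eclipses e d

/-- Partite set `i` dominates partite set `j`: some vertex of `i` pecks all of `j`. -/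
def Dominates (T : MTour V ι) (i j : ι) : Prop :=
  ∃ v, T.part v = i ∧ ∀ w, T.part w = j → T.peck v w

/-- reachability by a directed path of length at most `m`. -/
def reach (T : MTour V ι) : ℕ → V → V → Prop
  | 0, d, c => c = d
  | (m+1), d, c => T.reach m d c ∨ ∃ b, T.peck d b ∧ T.reach m b c

variable {T : MTour V ι}

lemma reach_self (m : ℕ) (d : V) : T.reach m d d := by
  cases m with
  | zero => rfl
  | succ m => exact Or.inl (reach_self m d)

lemma reach_mono {m m' : ℕ} (h : m ≤ m') {d c : V} (hr : T.reach m d c) : T.reach m' d c := by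
  induction m' generalizing m with
  | zero => cases Nat.le_zero.1 h; exact hr
  | succ n ih =>
    rcases Nat.lt_or_ge m (n+1) with h' | h'
    · exact Or.inl (ih (Nat.lt_succ_iff.1 h') hr)
    · have : m = n + 1 := le_antisymm h h'
      subst this; exact hr

lemma reach_of_peck {d c : V} (h : T.peck d c) : T.reach 1 d c :=
  Or.inr ⟨c, h, rfl⟩

lemma reach_one_of_reach_zero {d c : V} (h : T.reach 0 d c) : T.reach 1 d c := reach_mono (by norm_num) h

lemma reach_peck_left {m : ℕ} {d b c : V} (h : T.peck d b) (hr : T.reach m b c) :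
    T.reach (m+1) d c := Or.inr ⟨b, h, hr⟩

lemma reach_peck_right {m : ℕ} {d x c : V} (hr : T.reach m d x) (h : T.peck x c) :
    T.reach (m+1) d c := by
  induction m generalizing d with
  | zero => cases hr; exact reach_of_peck h
  | succ n ih =>
    rcases hr with hr | ⟨b, hb, hr⟩
    · exact reach_mono (Nat.le_succ _) (ih hr)
    · exact Or.inr ⟨b, hb, ih hr⟩

lemma reach_two_of_pecks {e d x : V} (h1 : T.peck e d) (h2 : T.peck d x) : T.reach 2 e x :=
  reach_peck_left h1 (reach_of_peck h2)

lemma hasPath_of_reach {m : ℕ} {d c : V} (h : T.reach m d c) : T.hasPath m d c := by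
  induction m generalizing d with
  | zero =>
    obtain rfl := h
    exact ⟨0, le_rfl, fun _ => c, rfl, rfl, fun i hi => absurd hi (Nat.not_lt_zero i)⟩
  | succ n ih =>
    rcases h with h | ⟨b, hb, h⟩
    · obtain ⟨k, hk, f, h0, hkc, hstep⟩ := ih h
      exact ⟨k, hk.trans (Nat.le_succ n), f, h0, hkc, hstep⟩
    · obtain ⟨k, hk, f, h0, hkc, hstep⟩ := ih h
      refine ⟨k+1, Nat.succ_le_succ hk, fun i => if i = 0 then d else f (i-1), by simp, by simp [hkc], ?_⟩
      intro i hi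
      rcases Nat.eq_zero_or_pos i with rfl | hpos
      · simpa [h0] using hb
      · have h1 : ¬ (i = 0) := Nat.pos_iff_ne_zero.1 hpos
        have h2 : ¬ (i + 1 = 0) := by omega
        simp only [h1, h2, if_false]
        have hlt : i - 1 < k := by omega
        have := hstep (i-1) hlt
        have heq : i - 1 + 1 = i + 1 - 1 := by omega
        rw [heq] at this
        exact this

lemma reach_of_chain : ∀ (k : ℕ) (f : ℕ → V) (d c : V), f 0 = d → f k = c →
    (∀ i < k, T.peck (f i) (f (i + 1))) → T.reach k d c := by
  intro k
  induction k with
  | zero => intro f d c h0 hk _; exact by rw [← hk, h0]; rfl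
  | succ n ih =>
    intro f d c h0 hk hstep
    refine Or.inr ⟨f 1, by rw [← h0]; exact hstep 0 (Nat.succ_pos n), ?_⟩
    exact ih (fun i => f (i+1)) (f 1) c rfl (by simpa using hk) (fun i hi => hstep (i+1) (by omega))

lemma reach_of_hasPath {m : ℕ} {d c : V} (h : T.hasPath m d c) : T.reach m d c := by
  obtain ⟨k, hk, f, h0, hkc, hstep⟩ := h
  exact reach_mono hk (reach_of_chain k f d c h0 hkc hstep)

lemma hasPath_iff_reach {m : ℕ} {d c : V} : T.hasPath m d c ↔ T.reach m d c :=
  ⟨reach_of_hasPath, hasPath_of_reach⟩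

end MTour
namespace MTour
section
variable {V ι : Type*} {T : MTour V ι}

/-- out-set -/
def out (T : MTour V ι) (v : V) : Set V := {w | T.peck v w}

/-- the ≤2-reach set, excluding the vertex itself -/
def R2 (T : MTour V ι) (v : V) : Set V := {x | x ≠ v ∧ T.reach 2 v x}

noncomputable def r2 (T : MTour V ι) (v : V) : ℕ := (T.R2 v).ncard

lemma peck_ne {d c : V} (h : T.peck d c) : c ≠ d := by
  rintro rfl; exact T.asymm _ _ h h

/-- Climbing lemma -/
lemma climb [Finite V] (v : V) :
    ∃ e, T.nonEclipsed e ∧ T.part e = T.part v ∧ T.out v ⊆ T.out e := by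
  classical
  set C : Set V := {w | T.part w = T.part v ∧ T.out v ⊆ T.out w} with hC
  have hne : C.Nonempty := ⟨v, rfl, subset_rfl⟩
  obtain ⟨e, heC, hmax⟩ := Set.exists_max_image C (fun w => (T.out w).ncard) (Set.toFinite C) hne
  refine ⟨e, ?_, heC.1, heC.2⟩
  rintro f ⟨hp, hsub, z, hz1, hz2⟩
  have hfC : f ∈ C := ⟨hp.trans heC.1, fun x hx => hsub x (heC.2 hx)⟩
  have hss : T.out e ⊂ T.out f := ⟨fun x hx => hsub x hx, fun hcon => hz2 (hcon hz1)⟩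
  have := Set.ncard_lt_ncard hss (Set.toFinite _)
  exact absurd (hmax f hfC) (by omega)

end

end MTour
namespace MTour
section
variable {V ι : Type*} {T : MTour V ι}

lemma reach1_cases {d x : V} (h : T.reach 1 d x) : x = d ∨ T.peck d x := by
  rcases h with h | ⟨b, hb, h⟩
  · exact Or.inl h
  · cases h; exact Or.inr hb

lemma reach2_cases {d x : V} (h : T.reach 2 d x) :
    x = d ∨ T.peck d x ∨ ∃ b, T.peck d b ∧ T.peck b x := by
  rcases h with h | ⟨b, hb, h⟩
  · rcases reach1_cases h with h | h
    · exact Or.inl h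
    · exact Or.inr (Or.inl h)
  · rcases reach1_cases h with rfl | h
    · exact Or.inr (Or.inl hb)
    · exact Or.inr (Or.inr ⟨b, hb, h⟩)

lemma mem_R2_of_peck {d x : V} (h : T.peck d x) : x ∈ T.R2 d :=
  ⟨peck_ne (T := T) h, reach_mono (by norm_num) (reach_of_peck h)⟩

lemma mem_R2_of_pecks {d b x : V} (h1 : T.peck d b) (h2 : T.peck b x) (hxd : x ≠ d) :
    x ∈ T.R2 d := ⟨hxd, reach_two_of_pecks h1 h2⟩

section Argmax
variable [Finite V] {d : V} (hd : T.nonEclipsed d)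
  (hmax : ∀ v, T.nonEclipsed v → T.r2 v ≤ T.r2 d)

omit [Finite V] in
/-- failure witness pecks d -/
lemma witness_peck_d {c : V} (hpart : T.part c ≠ T.part d) {m : ℕ}
    (hnp : ¬ T.reach (m+1) d c) : T.peck c d := by
  rcases T.complete d c (Ne.symm hpart) with h | h
  · exact absurd (reach_mono (by omega) (reach_of_peck h)) hnp
  · exact h

omit [Finite V] in
lemma witness_pecks_R2 {c : V} (hnp : ¬ T.reach 3 d c) {x : V}
    (hx : x ∈ T.R2 d) (hxp : T.part x ≠ T.part c) : T.peck c x := by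
  have hxc : x ≠ c := by rintro rfl; exact hnp (reach_mono (by norm_num) hx.2)
  rcases T.complete c x (Ne.symm hxp) with h | h
  · exact h
  · exact absurd (reach_peck_right hx.2 h) hnp

include hd hmax in
lemma lemma1 : T.isDuke 3 d := by
  classical
  intro c₀ hc₀
  rw [hasPath_iff_reach]
  by_contra hnp
  have hcd : T.peck c₀ d := witness_peck_d hc₀ (m := 2) hnp
  obtain ⟨e, he, hep, hesub⟩ := climb (T := T) c₀
  have hed : T.peck e d := hesub hcd
  -- e ∉ R2 d
  have henotR : e ∉ T.R2 d := by
    rintro ⟨hne, hr⟩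
    rcases reach2_cases hr with rfl | h | ⟨b, hb1, hb2⟩
    · exact hne rfl
    · exact T.asymm _ _ hed h
    · have hbpart : T.part b ≠ T.part c₀ := by
        rw [← hep]; exact T.inter _ _ hb2
      have : T.peck c₀ b := witness_pecks_R2 hnp (mem_R2_of_peck hb1) hbpart
      exact T.asymm _ _ (hesub this) hb2
  -- insert d (R2 d) ⊆ R2 e
  have hsub : insert d (T.R2 d) ⊆ T.R2 e := by
    rintro x (rfl | hx)
    · exact mem_R2_of_peck hed
    · refine ⟨fun hxe => henotR (hxe ▸ hx), ?_⟩
      by_cases hxP : T.part x = T.part c₀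
      · rcases reach2_cases hx.2 with rfl | h | ⟨b, hb1, hb2⟩
        · exact absurd rfl hx.1
        · exact reach_two_of_pecks hed h
        · have hbpart : T.part b ≠ T.part c₀ := by
            rw [← hxP]; exact T.inter _ _ hb2
          have : T.peck c₀ b := witness_pecks_R2 hnp (mem_R2_of_peck hb1) hbpart
          exact reach_two_of_pecks (hesub this) hb2
      · exact reach_mono (by norm_num) (reach_of_peck (hesub (witness_pecks_R2 hnp hx hxP)))
  have h1 : (insert d (T.R2 d)).ncard = T.r2 d + 1 :=
    Set.ncard_insert_of_notMem (fun h => h.1 rfl) (Set.toFinite _)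
  have h2 : (insert d (T.R2 d)).ncard ≤ T.r2 e := Set.ncard_le_ncard hsub (Set.toFinite _)
  have := hmax e he
  unfold MTour.r2 at *
  omega

end Argmax
end

end MTour
namespace MTour
section
set_option linter.unusedSectionVars false
variable {V ι : Type*} {T : MTour V ι} [Finite V] {d : V} (hd : T.nonEclipsed d)
  (hmax : ∀ v, T.nonEclipsed v → T.r2 v ≤ T.r2 d)
  {c : V} (hcpart : T.part c ≠ T.part d) (hnp2 : ¬ T.reach 2 d c)
  {e : V} (he : T.nonEclipsed e) (hep : T.part e = T.part c) (hesub : T.out c ⊆ T.out e)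

include hd hmax hcpart hnp2 he hep hesub in
lemma lemmaW : T.isDuke 3 e := by
  classical
  have hcd : T.peck c d := witness_peck_d hcpart (m := 1) hnp2
  have hdc : ¬ T.peck d c := fun h => hnp2 (reach_mono (by norm_num) (reach_of_peck h))
  -- c pecks all out-neighbours of d outside part c
  have hOdP : ∀ a, T.peck d a → T.part a ≠ T.part c → T.peck c a := by
    intro a ha hap
    have hac : a ≠ c := by rintro rfl; exact hnp2 (reach_mono (by norm_num) (reach_of_peck ha))
    rcases T.complete c a (Ne.symm hap) with h | h
    · exact h
    · exact absurd (reach_peck_right (reach_of_peck ha) h) hnp2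
  have hed : T.peck e d := hesub hcd
  intro c₂ hc₂
  rw [hasPath_iff_reach]
  by_contra hnpe
  -- e reaches every out-neighbour of d within 2
  have ha2 : ∀ a, T.peck d a → T.reach 2 e a := by
    intro a ha
    by_cases hap : T.part a = T.part c
    · exact reach_two_of_pecks hed ha
    · exact reach_mono (by norm_num) (reach_of_peck (hesub (hOdP a ha hap)))
  have F1 : ∀ a, T.peck d a → ¬ T.peck a c₂ ∧ a ≠ c₂ := by
    intro a ha
    constructor
    · intro h; exact hnpe (reach_peck_right (ha2 a ha) h)
    · rintro rfl; exact hnpe (reach_mono (by norm_num) (ha2 _ ha))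
  have F2 : ∀ a, T.peck d a → T.part a ≠ T.part c₂ → T.peck c₂ a := by
    intro a ha hap
    rcases T.complete c₂ a (Ne.symm hap) with h | h
    · exact h
    · exact absurd h (F1 a ha).1
  have F3 : ∀ u x, T.peck d u → T.part u = T.part c₂ → T.peck u x → T.peck c₂ x := by
    intro u x hdu hup hux
    have hupc : T.part u ≠ T.part c := by rw [hup, ← hep]; exact hc₂
    have heu : T.peck e u := hesub (hOdP u hdu hupc)
    have hx2 : T.reach 2 e x := reach_two_of_pecks heu hux
    have hxc₂ : ¬ T.peck x c₂ := fun h => hnpe (reach_peck_right hx2 h)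
    have hxne : x ≠ c₂ := by rintro rfl; exact hnpe (reach_mono (by norm_num) hx2)
    have hxp : T.part x ≠ T.part c₂ := by rw [← hup]; exact (T.inter _ _ hux).symm
    rcases T.complete c₂ x (Ne.symm hxp) with h | h
    · exact h
    · exact absurd h hxc₂
  have F4 : T.peck c₂ c := by
    have h1 : ¬ T.peck c c₂ := by
      intro h; exact hnpe (reach_mono (by norm_num) (reach_of_peck (hesub h)))
    have hpcc : T.part c ≠ T.part c₂ := by rw [← hep]; exact fun h => hc₂ h.symm
    rcases T.complete c c₂ hpcc with h | h
    · exact absurd h h1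
    · exact h
  by_cases hQ : T.part c₂ = T.part d
  · -- Case B : c₂ eclipses d, contradiction with nonEclipsed d
    refine hd c₂ ⟨hQ, fun a ha => F2 a ha ?_, ⟨c, F4, hdc⟩⟩
    rw [hQ]; exact (T.inter _ _ ha).symm
  · -- Case A : climb c₂ and beat the maximum
    have hc₂d : T.peck c₂ d := by
      have h1 : ¬ T.peck d c₂ := by
        intro h
        have : T.part c₂ ≠ T.part c := by rw [← hep]; exact hc₂
        exact hnpe (reach_mono (by norm_num) (reach_of_peck (hesub (hOdP c₂ h this))))
      rcases T.complete c₂ d hQ with h | h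
      · exact h
      · exact absurd h h1
    obtain ⟨f, hf, hfp, hfsub⟩ := climb (T := T) c₂
    have hfd : T.peck f d := hfsub hc₂d
    have hfnotR : f ∉ T.R2 d := by
      rintro ⟨hne, hr⟩
      rcases reach2_cases hr with rfl | h | ⟨b, hb1, hb2⟩
      · exact hne rfl
      · exact T.asymm _ _ hfd h
      · have hbp : T.part b ≠ T.part c₂ := by rw [← hfp]; exact T.inter _ _ hb2
        exact T.asymm _ _ (hfsub (F2 b hb1 hbp)) hb2
    have hsub : insert c (insert d (T.R2 d)) ⊆ T.R2 f := by
      rintro x (rfl | rfl | hx)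
      · refine ⟨?_, reach_mono (by norm_num) (reach_of_peck (hfsub F4))⟩
        rintro rfl
        rw [hfp] at hep
        exact hc₂ hep.symm
      · exact mem_R2_of_peck hfd
      · refine ⟨fun hxf => hfnotR (hxf ▸ hx), ?_⟩
        rcases reach2_cases hx.2 with rfl | h | ⟨b, hb1, hb2⟩
        · exact absurd rfl hx.1
        · exact reach_two_of_pecks hfd h
        · by_cases hbP : T.part b = T.part c₂
          · exact reach_mono (by norm_num) (reach_of_peck (hfsub (F3 b x hb1 hbP hb2)))
          · exact reach_two_of_pecks (hfsub (F2 b hb1 hbP)) hb2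
    have hc1 : c ∉ insert d (T.R2 d) := by
      rintro (rfl | hc')
      · exact hcpart rfl
      · exact hnp2 hc'.2
    have h1 : (insert c (insert d (T.R2 d))).ncard = T.r2 d + 2 := by
      rw [Set.ncard_insert_of_notMem hc1 (Set.toFinite _),
        Set.ncard_insert_of_notMem (fun h => h.1 rfl : d ∉ T.R2 d) (Set.toFinite _)]
      rfl
    have h2 : (insert c (insert d (T.R2 d))).ncard ≤ T.r2 f := Set.ncard_le_ncard hsub (Set.toFinite _)
    have := hmax f hf
    unfold MTour.r2 at *
    omega

end
end MTour
namespace MTour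
variable {V ι : Type*}

/-- Induced sub-multipartite-tournament on a set of vertices. -/
def restrict (T : MTour V ι) (s : Set V) : MTour s ι where
  part v := T.part v.val
  peck a b := T.peck a.val b.val
  complete u v h := T.complete u.val v.val h
  inter u v h := T.inter u.val v.val h
  asymm u v h := T.asymm u.val v.val h

variable {T : MTour V ι} {s : Set V}

lemma reach_restrict {m : ℕ} {a b : s} (h : (T.restrict s).reach m a b) :
    T.reach m a.val b.val := by
  induction m generalizing a with
  | zero => exact congrArg Subtype.val h
  | succ n ih =>
    rcases h with h | ⟨w, hw, h⟩
    · exact reach_mono (Nat.le_succ n) (ih h)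
    · exact Or.inr ⟨w.val, hw, ih h⟩

lemma duke_mono {m m' : ℕ} (h : m ≤ m') {v : V} (hv : T.isDuke m v) : T.isDuke m' v := by
  intro c hc
  rw [hasPath_iff_reach]
  exact reach_mono h (reach_of_hasPath (hv c hc))

lemma exists_first_hop {m : ℕ} {y w : V} (h : T.reach m y w) (hne : w ≠ y) :
    ∃ b, T.peck y b := by
  induction m with
  | zero => exact absurd h hne
  | succ n ih =>
    rcases h with h | ⟨b, hb, _⟩
    · exact ih h
    · exact ⟨b, hb⟩

section Lift
variable {x : V}

/-- The spawning vertex set: in-neighbours of x together with the rest of x's partite set -/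
def spawnSet (T : MTour V ι) (x : V) : Set V :=
  {v | T.peck v x ∨ (T.part v = T.part x ∧ v ≠ x)}

lemma notMem_spawnSet : x ∉ T.spawnSet x := by
  rintro (h | h)
  · exact T.asymm _ _ h h
  · exact h.2 rfl

/-- every vertex in another part than x which is not in the spawn set is pecked by x -/
lemma peck_of_not_spawn {z : V} (hz : z ∉ T.spawnSet x) (hzx : T.part z ≠ T.part x) :
    T.peck x z := by
  rcases T.complete x z (Ne.symm hzx) with h | h
  · exact h
  · exact absurd (Or.inl h) hz

/-- Any 3-duke of the restricted tournament on the spawn set is a 3-duke of T. -/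
lemma lift_duke3 {y : T.spawnSet x} (hy : (T.restrict (T.spawnSet x)).isDuke 3 y)
    (hB : ∃ w, T.peck w x) : T.isDuke 3 y.val := by
  intro z hz
  rw [hasPath_iff_reach]
  by_cases hzs : z ∈ T.spawnSet x
  · have := hy ⟨z, hzs⟩ hz
    rw [hasPath_iff_reach] at this
    exact reach_restrict this
  · -- z outside the spawn set
    rcases y.2 with hyB | hyQ
    · -- y pecks x
      by_cases hzx : z = x
      · subst hzx; exact reach_mono (by norm_num) (reach_of_peck hyB)
      · have hzpx : T.part z ≠ T.part x := by
          intro h; exact hzs (Or.inr ⟨h, hzx⟩)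
        exact reach_mono (by norm_num)
          (reach_two_of_pecks hyB (peck_of_not_spawn hzs hzpx))
    · -- y in the part of x
      have hzpx : T.part z ≠ T.part x := by rw [← hyQ.1]; exact hz
      have hxz : T.peck x z := peck_of_not_spawn hzs hzpx
      -- find a first hop b of y inside the spawn set; it must peck x
      obtain ⟨w, hw⟩ := hB
      have hws : w ∈ T.spawnSet x := Or.inl hw
      have hwp : (T.restrict (T.spawnSet x)).part ⟨w, hws⟩ ≠ (T.restrict (T.spawnSet x)).part y := by
        show T.part w ≠ T.part y.val
        rw [hyQ.1]
        exact T.inter _ _ hw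
      have h3 := hy ⟨w, hws⟩ hwp
      rw [hasPath_iff_reach] at h3
      have hwy : (⟨w, hws⟩ : T.spawnSet x) ≠ y := by
        intro h
        exact hwp (by rw [h])
      obtain ⟨b, hb⟩ := exists_first_hop h3 hwy
      have hbx : T.peck b.val x := by
        rcases b.2 with h | h
        · exact h
        · exact absurd h.1 (by rw [← hyQ.1]; exact (T.inter _ _ hb).symm)
      -- y → b → x → z
      exact Or.inr ⟨b.val, hb, reach_two_of_pecks hbx hxz⟩

/-- A 2-duke of the restricted tournament which pecks x is a 2-duke of T. -/
lemma lift_duke2 {y : T.spawnSet x} (hy : (T.restrict (T.spawnSet x)).isDuke 2 y)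
    (hyB : T.peck y.val x) : T.isDuke 2 y.val := by
  intro z hz
  rw [hasPath_iff_reach]
  by_cases hzs : z ∈ T.spawnSet x
  · have := hy ⟨z, hzs⟩ hz
    rw [hasPath_iff_reach] at this
    exact reach_restrict this
  · by_cases hzx : z = x
    · subst hzx; exact reach_mono (by norm_num) (reach_of_peck hyB)
    · have hzpx : T.part z ≠ T.part x := fun h => hzs (Or.inr ⟨h, hzx⟩)
      exact reach_two_of_pecks hyB (peck_of_not_spawn hzs hzpx)

end Lift
end MTour
namespace MTour
variable {V ι : Type*}

/-- abbreviation for the conclusion of the main theorem -/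
def dukeFour (T : MTour V ι) : Prop :=
  ∃ d₁ d₂ d₃ d₄, d₁ ≠ d₂ ∧ d₁ ≠ d₃ ∧ d₁ ≠ d₄ ∧ d₂ ≠ d₃ ∧ d₂ ≠ d₄ ∧ d₃ ≠ d₄ ∧
    T.isDuke 3 d₁ ∧ T.isDuke 3 d₂ ∧ T.isDuke 3 d₃ ∧ T.isDuke 3 d₄

def concl (T : MTour V ι) : Prop := (∃ d, T.isDuke 2 d) ∨ T.dukeFour

lemma not_duke2_witness {T : MTour V ι} {x : V} (h : ¬ T.isDuke 2 x) :
    ∃ w, T.part w ≠ T.part x ∧ ¬ T.reach 2 x w ∧ T.peck w x := by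
  unfold isDuke at h
  push_neg at h
  obtain ⟨w, hw1, hw2⟩ := h
  rw [hasPath_iff_reach] at hw2
  exact ⟨w, hw1, hw2, witness_peck_d hw1 (m := 1) hw2⟩

section Spawn
universe u w
variable {V : Type u} {ι : Type w} [Finite V] [Nonempty V] {T : MTour V ι} {n : ℕ}

lemma spawn
    (IH : ∀ (W : Type u) (κ : Type w) [Finite W] [Nonempty W] (S : MTour W κ),
      Nat.card W ≤ n → S.concl)
    (hcard : Nat.card V ≤ n + 1) (no2 : ∀ v, ¬ T.isDuke 2 v) {x : V} (hx3 : T.isDuke 3 x) :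
    T.dukeFour ∨ ∃ u, u ≠ x ∧ T.part u = T.part x ∧ T.isDuke 3 u := by
  classical
  obtain ⟨w, hwp, hw2, hwx⟩ := not_duke2_witness (no2 x)
  have hB : ∃ v, T.peck v x := ⟨w, hwx⟩
  set s := T.spawnSet x with hs
  haveI : Nonempty s := ⟨⟨w, Or.inl hwx⟩⟩
  have hslt : Nat.card s ≤ n := by
    have h1 : Nat.card s = s.ncard := (Nat.card_coe_set_eq s)
    have h2 : s.ncard < Nat.card V := by
      have hne : s ≠ Set.univ := by
        intro h
        exact notMem_spawnSet (T := T) (x := x)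
          (by rw [show T.spawnSet x = Set.univ from h]; trivial)
      have := Set.ncard_lt_ncard (Set.ssubset_univ_iff.2 hne) (Set.toFinite _)
      simpa [Set.ncard_univ] using this
    omega
  rcases IH s ι (T.restrict s) hslt with ⟨u', hu'⟩ | ⟨y₁, y₂, y₃, y₄, h12, h13, h14, h23, h24, h34, hy1, hy2, hy3, hy4⟩
  · -- the restricted tournament has a 2-duke
    rcases u'.2 with hB' | hQ'
    · exact absurd (lift_duke2 hu' hB') (no2 _)
    · refine Or.inr ⟨u'.val, hQ'.2, hQ'.1, ?_⟩
      exact lift_duke3 (duke_mono (by norm_num) hu') hB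
  · -- the restricted tournament has four 3-dukes; they lift
    refine Or.inl ⟨y₁.val, y₂.val, y₃.val, y₄.val, ?_, ?_, ?_, ?_, ?_, ?_,
      lift_duke3 hy1 hB, lift_duke3 hy2 hB, lift_duke3 hy3 hB, lift_duke3 hy4 hB⟩ <;>
      simp [Subtype.val_injective.ne_iff, h12, h13, h14, h23, h24, h34, Subtype.coe_ne_coe]
end Spawn

section Main
universe u w

theorem aux : ∀ (n : ℕ) (V : Type u) (ι : Type w) [Finite V] [Nonempty V] (T : MTour V ι),
    Nat.card V ≤ n → T.concl := by
  intro n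
  induction n with
  | zero =>
    intro V ι _ _ T hc
    have := Nat.card_pos (α := V)
    omega
  | succ n ih =>
    intro V ι _ _ T hcard
    by_cases h2 : ∃ v, T.isDuke 2 v
    · exact Or.inl h2
    push_neg at h2
    have no2 : ∀ v, ¬ T.isDuke 2 v := fun v hv => (h2 v) hv
    right
    -- get the argmax non-eclipsed vertex d
    have hNEne : {v | T.nonEclipsed v}.Nonempty := by
      obtain ⟨e0, he0, -, -⟩ := climb (T := T) (Classical.arbitrary V)
      exact ⟨e0, he0⟩
    obtain ⟨d, hdNE, hdmax⟩ := Set.exists_max_image {v | T.nonEclipsed v} T.r2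
      (Set.toFinite _) hNEne
    have hdmax' : ∀ v, T.nonEclipsed v → T.r2 v ≤ T.r2 d := fun v hv => hdmax v hv
    have hd3 : T.isDuke 3 d := lemma1 hdNE hdmax'
    -- d is not a 2-duke; get witness c and climb to e
    obtain ⟨c, hcp, hc2, hcd⟩ := not_duke2_witness (no2 d)
    obtain ⟨e, he, hep, hesub⟩ := climb (T := T) c
    have he3 : T.isDuke 3 e := lemmaW hdNE hdmax' hcp hc2 he hep hesub
    have hped : T.part e ≠ T.part d := by rw [hep]; exact hcp
    -- spawn partners for d and e
    rcases spawn ih hcard no2 hd3 with h4 | ⟨ud, hud1, hud2, hud3⟩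
    · exact h4
    rcases spawn ih hcard no2 he3 with h4 | ⟨ue, hue1, hue2, hue3⟩
    · exact h4
    refine ⟨d, ud, e, ue, Ne.symm hud1, ?_, ?_, ?_, ?_, Ne.symm hue1, hd3, hud3, he3, hue3⟩
    · rintro rfl; exact hped rfl
    · rintro rfl; exact hped (hue2.symm ▸ rfl)
    · rintro rfl; exact hped (hud2 ▸ rfl)
    · rintro rfl; exact hped ((hud2.symm.trans hue2).symm)

end Main
end MTour

theorem stmt8 {V ι : Type*} [Finite V] [Nonempty V] (T : MTour V ι) :
    (∃ d, T.isDuke 2 d) ∨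
    ∃ d₁ d₂ d₃ d₄, d₁ ≠ d₂ ∧ d₁ ≠ d₃ ∧ d₁ ≠ d₄ ∧ d₂ ≠ d₃ ∧ d₂ ≠ d₄ ∧ d₃ ≠ d₄ ∧
      T.isDuke 3 d₁ ∧ T.isDuke 3 d₂ ∧ T.isDuke 3 d₃ ∧ T.isDuke 3 d₄ := by
  rcases MTour.aux (Nat.card V) V ι T le_rfl with h | h
  · exact Or.inl h
  · exact Or.inr h
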